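/- Let $(X,\mathcal{A},\mu)$ be a probability space and $\Phi_1, \Phi_2 : X \to [0, \tilde C]$ measurable functions. Define posteriors $\nu_i(A) = Z_i^{-1}\int_A e^{-\Phi_i}d\mu$ with $Z_i = \int_X e^{-\Phi_i}d\mu$. Then the Hellinger distance satisfies $d_{Hell}(\nu_1, \nu_2)^2 \leq C \int_X |\Phi_1 - \Phi_2|^2\,d\mu$ for a constant $C$ depending only on $\tilde C$. -/

import Mathlib

open MeasureTheory

private lemma exp_sub_exp_le_aux {x y : ℝ} (hxy : x ≤ y) (hy : y ≤ 0) :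
    Real.exp y - Real.exp x ≤ y - x := by
  have h1 : (x - y) + 1 ≤ Real.exp (x - y) := Real.add_one_le_exp _
  have h2 : Real.exp (x - y) * Real.exp y = Real.exp x := by rw [← Real.exp_add]; ring_nf
  have h3 : Real.exp y ≤ 1 := Real.exp_le_one_iff.2 hy
  nlinarith [Real.exp_pos y]

private lemma exp_abs_lip {x y : ℝ} (hx : x ≤ 0) (hy : y ≤ 0) :
    |Real.exp x - Real.exp y| ≤ |x - y| := by
  rcases le_total x y with h | h
  · rw [abs_sub_comm, abs_of_nonneg (sub_nonneg.2 (Real.exp_le_exp.2 h)), abs_sub_comm,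
      abs_of_nonneg (sub_nonneg.2 h)]
    exact exp_sub_exp_le_aux h hy
  · rw [abs_of_nonneg (sub_nonneg.2 (Real.exp_le_exp.2 h)), abs_of_nonneg (sub_nonneg.2 h)]
    exact exp_sub_exp_le_aux h hx


private lemma key_alg {s t : ℝ} (hs : 0 < s) (ht : 0 < t) :
    (s⁻¹ - t⁻¹) * (s * t * (s + t)) = t ^ 2 - s ^ 2 := by
  field_simp
  ring

private lemma sqrt_inv_sub_sq_le {E Z₁ Z₂ : ℝ} (hE : 0 < E) (h1 : E ≤ Z₁) (h2 : E ≤ Z₂) :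
    (Real.sqrt Z₁⁻¹ - Real.sqrt Z₂⁻¹) ^ 2 * (4 * E ^ 3) ≤ (Z₁ - Z₂) ^ 2 := by
  have hZ₁ : 0 < Z₁ := hE.trans_le h1
  have hZ₂ : 0 < Z₂ := hE.trans_le h2
  have hs0 : 0 < Real.sqrt Z₁ := Real.sqrt_pos.2 hZ₁
  have ht0 : 0 < Real.sqrt Z₂ := Real.sqrt_pos.2 hZ₂
  have hs2 : Real.sqrt Z₁ ^ 2 = Z₁ := Real.sq_sqrt hZ₁.le
  have ht2 : Real.sqrt Z₂ ^ 2 = Z₂ := Real.sq_sqrt hZ₂.le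
  have hse : Real.sqrt E ≤ Real.sqrt Z₁ := Real.sqrt_le_sqrt h1
  have hte : Real.sqrt E ≤ Real.sqrt Z₂ := Real.sqrt_le_sqrt h2
  have he0 : 0 < Real.sqrt E := Real.sqrt_pos.2 hE
  have he2 : Real.sqrt E ^ 2 = E := Real.sq_sqrt hE.le
  have key : (Real.sqrt Z₁⁻¹ - Real.sqrt Z₂⁻¹) *
      (Real.sqrt Z₁ * Real.sqrt Z₂ * (Real.sqrt Z₁ + Real.sqrt Z₂)) = Z₂ - Z₁ := by
    rw [Real.sqrt_inv, Real.sqrt_inv, key_alg hs0 ht0, hs2, ht2]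
  have keySq : (Real.sqrt Z₁⁻¹ - Real.sqrt Z₂⁻¹) ^ 2 *
      (Real.sqrt Z₁ * Real.sqrt Z₂ * (Real.sqrt Z₁ + Real.sqrt Z₂)) ^ 2 = (Z₂ - Z₁) ^ 2 := by
    rw [← mul_pow, key]
  have hD : 2 * Real.sqrt E ^ 3 ≤ Real.sqrt Z₁ * Real.sqrt Z₂ * (Real.sqrt Z₁ + Real.sqrt Z₂) := by
    nlinarith [he0, hse, hte]
  have hD2 : 4 * E ^ 3 ≤ (Real.sqrt Z₁ * Real.sqrt Z₂ * (Real.sqrt Z₁ + Real.sqrt Z₂)) ^ 2 := by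
    have h4 := pow_le_pow_left₀ (by positivity) hD 2
    have hE3 : Real.sqrt E ^ 6 = E ^ 3 := by
      rw [show (6 : ℕ) = 2 * 3 from rfl, pow_mul, he2]
    nlinarith [h4, hE3]
  calc (Real.sqrt Z₁⁻¹ - Real.sqrt Z₂⁻¹) ^ 2 * (4 * E ^ 3)
      ≤ (Real.sqrt Z₁⁻¹ - Real.sqrt Z₂⁻¹) ^ 2 *
        (Real.sqrt Z₁ * Real.sqrt Z₂ * (Real.sqrt Z₁ + Real.sqrt Z₂)) ^ 2 :=
        mul_le_mul_of_nonneg_left hD2 (sq_nonneg _)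
  _ = (Z₁ - Z₂) ^ 2 := by rw [keySq]; ring

set_option maxHeartbeats 1600000 in
/-- Hellinger stability of the Bayesian posterior with respect to
the negative log-likelihood: there is a constant `C > 0` depending only on the
uniform bound `C̃` such that
`d_Hell(ν₁, ν₂)² = ½∫ (√(dν₁/dμ) - √(dν₂/dμ))² dμ ≤ C ∫ |Φ₁ - Φ₂|² dμ`,
where `dνᵢ/dμ = Zᵢ⁻¹ e^{-Φᵢ}` and `Zᵢ = ∫ e^{-Φᵢ} dμ`. -/
theorem hellinger_stability (Ct : ℝ) (hCt : 0 < Ct) :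
    ∃ C : ℝ, 0 < C ∧
      ∀ (X : Type) (_ : MeasurableSpace X) (μ : Measure X), IsProbabilityMeasure μ →
        ∀ (Φ₁ Φ₂ : X → ℝ), Measurable Φ₁ → Measurable Φ₂ →
          (∀ x, Φ₁ x ∈ Set.Icc (0 : ℝ) Ct) → (∀ x, Φ₂ x ∈ Set.Icc (0 : ℝ) Ct) →
          (1 / 2) * ∫ x,
              (Real.sqrt ((∫ y, Real.exp (-Φ₁ y) ∂μ)⁻¹ * Real.exp (-Φ₁ x)) -
               Real.sqrt ((∫ y, Real.exp (-Φ₂ y) ∂μ)⁻¹ * Real.exp (-Φ₂ x))) ^ 2 ∂μ ≤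
            C * ∫ x, |Φ₁ x - Φ₂ x| ^ 2 ∂μ := by
  refine ⟨Real.exp (3 * Ct), Real.exp_pos _, ?_⟩
  intro X mX μ hμ Φ₁ Φ₂ hm1 hm2 hb1 hb2
  set Z₁ : ℝ := ∫ y, Real.exp (-Φ₁ y) ∂μ with hZ₁def
  set Z₂ : ℝ := ∫ y, Real.exp (-Φ₂ y) ∂μ with hZ₂def
  have me1 : Measurable fun x => Real.exp (-Φ₁ x) := hm1.neg.exp
  have me2 : Measurable fun x => Real.exp (-Φ₂ x) := hm2.neg.exp
  have hexple : ∀ (Φ : X → ℝ), (∀ x, Φ x ∈ Set.Icc (0:ℝ) Ct) → ∀ x, Real.exp (-Φ x) ≤ 1 := by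
    intro Φ hb x
    exact Real.exp_le_one_iff.2 (by linarith [(hb x).1])
  have int1 : Integrable (fun x => Real.exp (-Φ₁ x)) μ := by
    refine Integrable.mono' (integrable_const (1:ℝ)) me1.aestronglyMeasurable ?_
    filter_upwards with x
    rw [Real.norm_eq_abs, abs_of_pos (Real.exp_pos _)]
    exact hexple Φ₁ hb1 x
  have int2 : Integrable (fun x => Real.exp (-Φ₂ x)) μ := by
    refine Integrable.mono' (integrable_const (1:ℝ)) me2.aestronglyMeasurable ?_
    filter_upwards with x
    rw [Real.norm_eq_abs, abs_of_pos (Real.exp_pos _)]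
    exact hexple Φ₂ hb2 x
  have hZge : ∀ (Φ : X → ℝ), Integrable (fun x => Real.exp (-Φ x)) μ →
      (∀ x, Φ x ∈ Set.Icc (0:ℝ) Ct) → Real.exp (-Ct) ≤ ∫ y, Real.exp (-Φ y) ∂μ := by
    intro Φ hint hb
    calc Real.exp (-Ct) = ∫ _, Real.exp (-Ct) ∂μ := by simp
    _ ≤ ∫ y, Real.exp (-Φ y) ∂μ :=
      integral_mono (integrable_const _) hint fun x => Real.exp_le_exp.2 (by linarith [(hb x).2])
  have hZ₁ge : Real.exp (-Ct) ≤ Z₁ := hZge Φ₁ int1 hb1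
  have hZ₂ge : Real.exp (-Ct) ≤ Z₂ := hZge Φ₂ int2 hb2
  have hZ₁pos : 0 < Z₁ := lt_of_lt_of_le (Real.exp_pos _) hZ₁ge
  have hZ₂pos : 0 < Z₂ := lt_of_lt_of_le (Real.exp_pos _) hZ₂ge
  have hZ₁le : Z₁ ≤ 1 := by
    calc Z₁ ≤ ∫ _, (1:ℝ) ∂μ := integral_mono int1 (integrable_const _) (hexple Φ₁ hb1)
    _ = 1 := by simp
  have hZ₂le : Z₂ ≤ 1 := by
    calc Z₂ ≤ ∫ _, (1:ℝ) ∂μ := integral_mono int2 (integrable_const _) (hexple Φ₂ hb2)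
    _ = 1 := by simp
  set a : ℝ := Real.sqrt Z₁⁻¹ with hadef
  set b : ℝ := Real.sqrt Z₂⁻¹ with hbdef
  have ha2 : a ^ 2 = Z₁⁻¹ := Real.sq_sqrt (inv_nonneg.2 hZ₁pos.le)
  have hb2' : b ^ 2 = Z₂⁻¹ := Real.sq_sqrt (inv_nonneg.2 hZ₂pos.le)
  have hainv : Z₁⁻¹ ≤ Real.exp Ct := by
    rw [show Real.exp Ct = (Real.exp (-Ct))⁻¹ by rw [← Real.exp_neg]; ring_nf]
    exact inv_anti₀ (Real.exp_pos _) hZ₁ge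
  have hsplit : ∀ (Z : ℝ) (hZ : 0 < Z) (s : ℝ),
      Real.sqrt (Z⁻¹ * Real.exp (-s)) = Real.sqrt Z⁻¹ * Real.exp (-s / 2) := by
    intro Z hZ s
    rw [Real.sqrt_mul (inv_nonneg.2 hZ.le),
      show Real.exp (-s) = Real.exp (-s / 2) * Real.exp (-s / 2) by rw [← Real.exp_add]; ring_nf,
      Real.sqrt_mul_self (Real.exp_pos _).le]
  -- pointwise bound
  have hpt : ∀ x, (Real.sqrt (Z₁⁻¹ * Real.exp (-Φ₁ x)) - Real.sqrt (Z₂⁻¹ * Real.exp (-Φ₂ x))) ^ 2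
      ≤ Real.exp Ct / 2 * |Φ₁ x - Φ₂ x| ^ 2 + 2 * (a - b) ^ 2 := by
    intro x
    rw [hsplit Z₁ hZ₁pos (Φ₁ x), hsplit Z₂ hZ₂pos (Φ₂ x), sq_abs]
    set u : ℝ := Real.exp (-Φ₁ x / 2) with hudef
    set v : ℝ := Real.exp (-Φ₂ x / 2) with hvdef
    have hv1 : v ≤ 1 := Real.exp_le_one_iff.2 (by linarith [(hb2 x).1])
    have hv0 : 0 < v := Real.exp_pos _
    have ha0 : 0 ≤ a := Real.sqrt_nonneg _
    have huv : |u - v| ≤ |Φ₁ x - Φ₂ x| / 2 := by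
      have h := exp_abs_lip (x := -Φ₁ x / 2) (y := -Φ₂ x / 2)
        (by linarith [(hb1 x).1]) (by linarith [(hb2 x).1])
      rw [show -Φ₁ x / 2 - -Φ₂ x / 2 = -(Φ₁ x - Φ₂ x) / 2 by ring, abs_div, abs_neg] at h
      simpa using h
    have huv2 : (u - v) ^ 2 ≤ (Φ₁ x - Φ₂ x) ^ 2 / 4 := by
      nlinarith [abs_nonneg (u - v), sq_abs (u - v), sq_abs (Φ₁ x - Φ₂ x), abs_nonneg (Φ₁ x - Φ₂ x)]
    nlinarith [sq_nonneg (a * (u - v) - (a - b) * v), sq_nonneg (u - v), sq_nonneg (a - b),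
      mul_nonneg (sq_nonneg (u - v)) (sub_nonneg.2 (ha2.symm ▸ hainv : a ^ 2 ≤ Real.exp Ct)),
      mul_nonneg (sq_nonneg (a - b)) (by nlinarith : (0:ℝ) ≤ 1 - v ^ 2)]
  -- integrability
  have mdiff : Measurable fun x => |Φ₁ x - Φ₂ x| ^ 2 := ((hm1.sub hm2).abs.pow_const 2)
  have hdiffbd : ∀ x, |Φ₁ x - Φ₂ x| ≤ Ct := by
    intro x
    rw [abs_sub_le_iff]
    constructor <;> [linarith [(hb1 x).2, (hb2 x).1]; linarith [(hb2 x).2, (hb1 x).1]]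
  have intJ : Integrable (fun x => |Φ₁ x - Φ₂ x| ^ 2) μ := by
    refine Integrable.mono' (integrable_const (Ct ^ 2)) mdiff.aestronglyMeasurable ?_
    filter_upwards with x
    rw [Real.norm_eq_abs, abs_of_nonneg (by positivity)]
    exact pow_le_pow_left₀ (abs_nonneg _) (hdiffbd x) 2
  set J : ℝ := ∫ x, |Φ₁ x - Φ₂ x| ^ 2 ∂μ with hJdef
  have hJ0 : 0 ≤ J := integral_nonneg fun x => by positivity
  clear_value Z₁ Z₂ a b J
  have intRHS : Integrable (fun x => Real.exp Ct / 2 * |Φ₁ x - Φ₂ x| ^ 2 + 2 * (a - b) ^ 2) μ :=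
    (intJ.const_mul _).add (integrable_const _)
  have mg : Measurable fun x =>
      (Real.sqrt (Z₁⁻¹ * Real.exp (-Φ₁ x)) - Real.sqrt (Z₂⁻¹ * Real.exp (-Φ₂ x))) ^ 2 :=
    (((measurable_const.mul me1).sqrt.sub (measurable_const.mul me2).sqrt).pow_const 2)
  have intg : Integrable (fun x =>
      (Real.sqrt (Z₁⁻¹ * Real.exp (-Φ₁ x)) - Real.sqrt (Z₂⁻¹ * Real.exp (-Φ₂ x))) ^ 2) μ := by
    refine Integrable.mono' intRHS mg.aestronglyMeasurable ?_
    filter_upwards with x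
    rw [Real.norm_eq_abs, abs_of_nonneg (sq_nonneg _)]
    exact hpt x
  have step1 : (∫ x, (Real.sqrt (Z₁⁻¹ * Real.exp (-Φ₁ x)) -
      Real.sqrt (Z₂⁻¹ * Real.exp (-Φ₂ x))) ^ 2 ∂μ) ≤ Real.exp Ct / 2 * J + 2 * (a - b) ^ 2 := by
    calc (∫ x, (Real.sqrt (Z₁⁻¹ * Real.exp (-Φ₁ x)) -
        Real.sqrt (Z₂⁻¹ * Real.exp (-Φ₂ x))) ^ 2 ∂μ)
        ≤ ∫ x, (Real.exp Ct / 2 * |Φ₁ x - Φ₂ x| ^ 2 + 2 * (a - b) ^ 2) ∂μ :=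
          integral_mono intg intRHS hpt
    _ = Real.exp Ct / 2 * J + 2 * (a - b) ^ 2 := by
        rw [integral_add (intJ.const_mul _) (integrable_const _), integral_const_mul,
          integral_const, hJdef]
        simp
  -- bound on (a-b)^2
  have habZ : (a - b) ^ 2 ≤ Real.exp (3 * Ct) / 4 * (Z₁ - Z₂) ^ 2 := by
    have h := sqrt_inv_sub_sq_le (Real.exp_pos (-Ct)) hZ₁ge hZ₂ge
    rw [← hadef, ← hbdef] at h
    have hE3 : Real.exp (-Ct) ^ 3 = Real.exp (-(3 * Ct)) := by
      rw [← Real.exp_nat_mul]; ring_nf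
    rw [hE3] at h
    have hexpmul : Real.exp (3 * Ct) * Real.exp (-(3 * Ct)) = 1 := by
      rw [← Real.exp_add]; ring_nf; exact Real.exp_zero
    nlinarith [h, Real.exp_pos (3 * Ct), sq_nonneg (a - b), Real.exp_pos (-(3 * Ct))]
  -- (Z₁ - Z₂)^2 ≤ J via Lipschitz + Cauchy-Schwarz
  have hZdiff : (Z₁ - Z₂) ^ 2 ≤ J := by
    have intabs : Integrable (fun x => |Φ₁ x - Φ₂ x|) μ := by
      refine Integrable.mono' (integrable_const Ct) (hm1.sub hm2).abs.aestronglyMeasurable ?_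
      filter_upwards with x
      rw [Real.norm_eq_abs, abs_abs]
      exact hdiffbd x
    have h1 : |Z₁ - Z₂| ≤ ∫ x, |Φ₁ x - Φ₂ x| ∂μ := by
      rw [hZ₁def, hZ₂def, ← integral_sub int1 int2]
      calc |∫ x, (Real.exp (-Φ₁ x) - Real.exp (-Φ₂ x)) ∂μ|
          ≤ ∫ x, |Real.exp (-Φ₁ x) - Real.exp (-Φ₂ x)| ∂μ := by
            simpa [Real.norm_eq_abs] using
              norm_integral_le_integral_norm (fun x => Real.exp (-Φ₁ x) - Real.exp (-Φ₂ x)) (μ := μ)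
      _ ≤ ∫ x, |Φ₁ x - Φ₂ x| ∂μ := by
            refine integral_mono (int1.sub int2).abs intabs fun x => ?_
            have h := exp_abs_lip (x := -Φ₁ x) (y := -Φ₂ x)
              (by linarith [(hb1 x).1]) (by linarith [(hb2 x).1])
            calc |Real.exp (-Φ₁ x) - Real.exp (-Φ₂ x)| ≤ |-Φ₁ x - -Φ₂ x| := h
            _ = |Φ₁ x - Φ₂ x| := by rw [show -Φ₁ x - -Φ₂ x = -(Φ₁ x - Φ₂ x) by ring, abs_neg]
    have hmem : MemLp (fun x => |Φ₁ x - Φ₂ x|) 2 μ := by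
      refine memLp_of_bounded (a := 0) (b := Ct) ?_ (hm1.sub hm2).abs.aestronglyMeasurable 2
      filter_upwards with x
      exact ⟨abs_nonneg _, hdiffbd x⟩
    have hvar := ProbabilityTheory.variance_nonneg (fun x => |Φ₁ x - Φ₂ x|) μ
    rw [ProbabilityTheory.variance_eq_sub hmem] at hvar
    simp only [Pi.pow_apply] at hvar
    have h2 : (∫ x, |Φ₁ x - Φ₂ x| ∂μ) ^ 2 ≤ J := by
      rw [hJdef]
      linarith
    nlinarith [abs_nonneg (Z₁ - Z₂), sq_abs (Z₁ - Z₂),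
      integral_nonneg (μ := μ) (f := fun x => |Φ₁ x - Φ₂ x|) (fun x => abs_nonneg (Φ₁ x - Φ₂ x))]
  -- final assembly
  have habJ : (a - b) ^ 2 ≤ Real.exp (3 * Ct) / 4 * J := by
    nlinarith [Real.exp_pos (3 * Ct), habZ, hZdiff]
  have hexpmono : Real.exp Ct ≤ Real.exp (3 * Ct) := Real.exp_le_exp.2 (by linarith)
  nlinarith [step1, habJ, mul_nonneg (sub_nonneg.2 hexpmono) hJ0, hJ0, Real.exp_pos Ct]
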